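/- Let n, q be natural numbers with 0 < q < n. Let S₁, …, Sₙ : ℝ → ℝ be differentiable functions; for z ∈ ℝⁿ write S(z) = (S₁(z₁), …, Sₙ(zₙ)) ∈ ℝⁿ and DS(z) for the n×n diagonal matrix with entries S₁′(z₁), …, Sₙ′(zₙ). Let C be an n×n diagonal matrix, A an n×n real matrix, p⋆, p ∈ ℝ, x⋆ ∈ ℝⁿ, and let V ∈ ℝ^{n×q} and W ∈ ℝ^{n×(n−q)} have orthonormal columns. Suppose (−C + p⋆ A DS(x⋆)) V = 0. Then for every y ∈ ℝⁿ, the spectral norm of the (n−q)×(q+1) matrix Wᵀ[(−C + pA·DS(y))V | A(S(y) − S(x⋆))] equals the spectral norm of the n×(q+1) matrix WWᵀA[(p·DS(y) − p⋆·DS(x⋆))V | S(y) − S(x⋆)]. -/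

import Mathlib

open Matrix

/-- Spectral norm of a real matrix: the operator norm induced by Euclidean vector norms. -/
noncomputable def specNorm {m n : Type*} [Fintype m] [Fintype n] [DecidableEq n]
    (M : Matrix m n ℝ) : ℝ :=
  ‖LinearMap.toContinuousLinearMap (Matrix.toEuclideanLin M)‖

/-- The diagonal matrix `DS(z)` of derivatives `Sᵢ′(zᵢ)` of the activation functions. -/
noncomputable def DS {n : ℕ} (S : Fin n → ℝ → ℝ) (z : Fin n → ℝ) :
    Matrix (Fin n) (Fin n) ℝ :=
  Matrix.diagonal fun i => deriv (S i) (z i)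

lemma opNorm_eq_of_norm_apply_eq {E F G : Type*} [NormedAddCommGroup E]
    [NormedAddCommGroup F] [NormedAddCommGroup G] [NormedSpace ℝ E] [NormedSpace ℝ F]
    [NormedSpace ℝ G] (f : E →L[ℝ] F) (g : E →L[ℝ] G)
    (h : ∀ v, ‖f v‖ = ‖g v‖) : ‖f‖ = ‖g‖ := by
  refine le_antisymm ?_ ?_
  · exact f.opNorm_le_bound (norm_nonneg g) fun v => (h v).le.trans (g.le_opNorm v)
  · exact g.opNorm_le_bound (norm_nonneg f) fun v => by rw [← h v]; exact f.le_opNorm v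

lemma mulVec_norm_eq {n k : ℕ} (W : Matrix (Fin n) (Fin k) ℝ) (hW : Wᵀ * W = 1)
    (u : Fin k → ℝ) :
    ((W.mulVec u) ⬝ᵥ (W.mulVec u)) = u ⬝ᵥ u := by
  have h2 : u ⬝ᵥ (Wᵀ *ᵥ (W *ᵥ u)) = (W *ᵥ u) ⬝ᵥ (W *ᵥ u) := by
    rw [Matrix.dotProduct_mulVec, Matrix.vecMul_transpose]
  rw [← h2, Matrix.mulVec_mulVec, hW, Matrix.one_mulVec]

lemma specNorm_mul_of_orthonormal {n k : ℕ} {m : Type*} [Fintype m] [DecidableEq m]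
    (W : Matrix (Fin n) (Fin k) ℝ)
    (hW : Wᵀ * W = 1) (N : Matrix (Fin k) m ℝ) :
    specNorm (W * N) = specNorm N := by
  unfold specNorm
  apply opNorm_eq_of_norm_apply_eq
  intro v
  simp only [LinearMap.coe_toContinuousLinearMap', Matrix.toEuclideanLin_apply]
  rw [EuclideanSpace.norm_eq, EuclideanSpace.norm_eq]
  congr 1
  have key := mulVec_norm_eq W hW (N.mulVec ((WithLp.equiv 2 (m → ℝ)) v))
  simp only [dotProduct, ← Matrix.mulVec_mulVec] at key ⊢
  simpa [Real.norm_eq_abs, sq_abs, pow_two] using key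

/-- Hopfield model: the norm of `Wᵀ[D_xΦ(y,p)·V | A(S(y) − S(x⋆))]` equals the norm of
`WWᵀA[(p·DS(y) − p⋆·DS(x⋆))V | S(y) − S(x⋆)]`, given `(−C + p⋆A·DS(x⋆))V = 0`. -/
theorem stmt_6 (n q : ℕ) (hq : 0 < q) (hqn : q < n)
    (S : Fin n → ℝ → ℝ) (hS : ∀ i, Differentiable ℝ (S i))
    (C A : Matrix (Fin n) (Fin n) ℝ) (hC : C.IsDiag)
    (pstar p : ℝ) (xstar : Fin n → ℝ)
    (V : Matrix (Fin n) (Fin q) ℝ) (W : Matrix (Fin n) (Fin (n - q)) ℝ)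
    (hV : Vᵀ * V = 1) (hW : Wᵀ * W = 1)
    (hker : (-C + pstar • (A * DS S xstar)) * V = 0) :
    ∀ y : Fin n → ℝ,
      specNorm (Wᵀ * Matrix.fromCols
          ((-C + p • (A * DS S y)) * V)
          (Matrix.of fun i (_ : Fin 1) =>
            A.mulVec (fun j => S j (y j) - S j (xstar j)) i))
      = specNorm (W * Wᵀ * (A * Matrix.fromCols
          ((p • DS S y - pstar • DS S xstar) * V)
          (Matrix.of fun i (_ : Fin 1) => S i (y i) - S i (xstar i)))) := by
  intro y
  have hM : Matrix.fromCols
          ((-C + p • (A * DS S y)) * V)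
          (Matrix.of fun i (_ : Fin 1) =>
            A.mulVec (fun j => S j (y j) - S j (xstar j)) i)
      = A * Matrix.fromCols
          ((p • DS S y - pstar • DS S xstar) * V)
          (Matrix.of fun i (_ : Fin 1) => S i (y i) - S i (xstar i)) := by
    have hcol1 : (-C + p • (A * DS S y)) * V
        = A * ((p • DS S y - pstar • DS S xstar) * V) := by
      have h1 : (-C + p • (A * DS S y)) * V
          = (-C + pstar • (A * DS S xstar)) * V
            + (A * (p • DS S y - pstar • DS S xstar)) * V := by
        rw [← Matrix.add_mul]
        congr 1
        rw [Matrix.mul_sub]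
        simp [Matrix.mul_smul]
      rw [h1, hker, zero_add, Matrix.mul_assoc]
    have hcol2 : (Matrix.of fun i (_ : Fin 1) =>
          A.mulVec (fun j => S j (y j) - S j (xstar j)) i)
        = A * (Matrix.of fun i (_ : Fin 1) => S i (y i) - S i (xstar i)) := by
      ext i j
      simp [Matrix.mul_apply, Matrix.mulVec, dotProduct]
    rw [Matrix.mul_fromCols, hcol1, hcol2]
  rw [hM, Matrix.mul_assoc W Wᵀ]
  exact (specNorm_mul_of_orthonormal W hW _).symm
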